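/- Let d ≥ 3 and σ^{PT}(λ) = λ I − (λ+1)|Φ₀⟩⟨Φ₀| on ℂ^d ⊗ ℂ^d with λ ≥ 0, where |Φ₀⟩ = (1/√d)Σ_i |ii⟩. If λ ≥ 2/(d−2), then for every vector |v⟩ of Schmidt rank at most two, ⟨v|σ^{PT}(λ)|v⟩ ≥ 0. -/

import Mathlib

open scoped BigOperators
open Matrix

/-- The maximally entangled state `|Φ₀⟩ = (1/√d) Σ_i |ii⟩`. -/
noncomputable def Phi0 (d : ℕ) : Fin d × Fin d → ℂ :=
  fun p => if p.1 = p.2 then (1 / Real.sqrt d : ℂ) else 0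

/-- `σ^{PT}(λ) = λ I − (λ+1)|Φ₀⟩⟨Φ₀|`. -/
noncomputable def sigmaPT (d : ℕ) (lam : ℝ) :
    Matrix (Fin d × Fin d) (Fin d × Fin d) ℂ :=
  Matrix.of fun x y => (lam : ℂ) * (if x = y then 1 else 0)
    - ((lam : ℂ) + 1) * (Phi0 d x * star (Phi0 d y))

set_option maxHeartbeats 1000000 in
/-- For `d ≥ 3` and `λ ≥ 2/(d−2)`, every (unit, Schmidt rank at
most two) vector `|v⟩ = √μ₁ |e₁⟩⊗|e₂⟩ + √μ₂ |e₃⟩⊗|e₄⟩` satisfies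
`⟨v|σ^{PT}(λ)|v⟩ ≥ 0`. -/
theorem stmt_7 (d : ℕ) (hd : 3 ≤ d) (lam : ℝ) (hlam0 : 0 ≤ lam)
    (hlam : 2 / ((d : ℝ) - 2) ≤ lam)
    (μ₁ μ₂ : ℝ) (hμ₁ : 0 ≤ μ₁) (hμ₂ : 0 ≤ μ₂) (hμ : μ₁ + μ₂ = 1)
    (e₁ e₂ e₃ e₄ : Fin d → ℂ)
    (he₁ : ∑ i, ‖e₁ i‖ ^ 2 = 1)
    (he₂ : ∑ i, ‖e₂ i‖ ^ 2 = 1)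
    (he₃ : ∑ i, ‖e₃ i‖ ^ 2 = 1)
    (he₄ : ∑ i, ‖e₄ i‖ ^ 2 = 1)
    (h13 : ∑ i, star (e₁ i) * e₃ i = 0)
    (h24 : ∑ i, star (e₂ i) * e₄ i = 0)
    (v : Fin d × Fin d → ℂ)
    (hv : v = fun p => (Real.sqrt μ₁ : ℂ) * (e₁ p.1 * e₂ p.2)
        + (Real.sqrt μ₂ : ℂ) * (e₃ p.1 * e₄ p.2)) :
    0 ≤ (star v ⬝ᵥ (sigmaPT d lam) *ᵥ v).re := by
  classical
  have hd3 : (3:ℝ) ≤ (d:ℝ) := by exact_mod_cast hd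
  have hd2 : (0:ℝ) < (d:ℝ) - 2 := by linarith
  have hdpos : (0:ℝ) < (d:ℝ) := by linarith
  set a : ℂ := ∑ i, e₁ i * e₂ i with ha
  set b : ℂ := ∑ i, e₃ i * e₄ i with hb
  set c : ℂ := ∑ x, (starRingEnd ℂ) (Phi0 d x) * v x with hc
  -- Phi0 is real
  have hPhiReal : ∀ x, (starRingEnd ℂ) (Phi0 d x) = Phi0 d x := by
    intro x
    by_cases h : x.1 = x.2 <;> simp [Phi0, h, Complex.conj_ofReal]
  -- mulVec formula
  have hmul : ∀ x, ((sigmaPT d lam) *ᵥ v) x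
      = (lam:ℂ) * v x - ((lam:ℂ)+1) * (Phi0 d x * c) := by
    intro x
    simp only [Matrix.mulVec, dotProduct, sigmaPT, Matrix.of_apply,
      sub_mul, Finset.sum_sub_distrib]
    congr 1
    · simp [mul_ite, ite_mul, mul_assoc, Finset.sum_ite_eq]
    · rw [hc, Finset.mul_sum, Finset.mul_sum]
      apply Finset.sum_congr rfl
      intro y _
      rw [Complex.star_def]
      ring
  -- the quadratic form
  have hcc : ∑ x, (starRingEnd ℂ) (v x) * Phi0 d x = (starRingEnd ℂ) c := by
    rw [hc, map_sum]
    apply Finset.sum_congr rfl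
    intro x _
    simp [_root_.map_mul, Complex.conj_conj, hPhiReal x, mul_comm]
  have hdot : (star v ⬝ᵥ (sigmaPT d lam) *ᵥ v)
      = (lam:ℂ) * (∑ x, (starRingEnd ℂ) (v x) * v x)
        - ((lam:ℂ)+1) * ((starRingEnd ℂ) c * c) := by
    calc (star v ⬝ᵥ (sigmaPT d lam) *ᵥ v)
        = ∑ x, ((lam:ℂ) * ((starRingEnd ℂ) (v x) * v x)
            - ((lam:ℂ)+1) * (((starRingEnd ℂ) (v x) * Phi0 d x) * c)) := by
          simp only [dotProduct, Pi.star_apply, Complex.star_def]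
          apply Finset.sum_congr rfl
          intro x _
          rw [hmul x]; ring
      _ = (lam:ℂ) * (∑ x, (starRingEnd ℂ) (v x) * v x)
            - ((lam:ℂ)+1) * ((∑ x, (starRingEnd ℂ) (v x) * Phi0 d x) * c) := by
          rw [Finset.sum_sub_distrib, ← Finset.mul_sum]
          congr 1
          rw [Finset.sum_mul, Finset.mul_sum]
      _ = _ := by rw [hcc]
  -- elementary sums
  have habssum : ∀ (e : Fin d → ℂ), (∑ i, ‖e i‖ ^ 2 = 1) →
      (∑ i, (starRingEnd ℂ) (e i) * e i) = 1 := by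
    intro e he
    have : ∀ i, (starRingEnd ℂ) (e i) * e i = ((‖e i‖ ^ 2 : ℝ) : ℂ) := by
      intro i
      rw [mul_comm, Complex.mul_conj, Complex.sq_norm]
    rw [Finset.sum_congr rfl (fun i _ => this i), ← Complex.ofReal_sum, he,
      Complex.ofReal_one]
  have hS1 := habssum e₁ he₁
  have hS2 := habssum e₂ he₂
  have hS3 := habssum e₃ he₃
  have hS4 := habssum e₄ he₄
  have h13' : ∑ i, (starRingEnd ℂ) (e₁ i) * e₃ i = 0 := h13
  have h24' : ∑ i, (starRingEnd ℂ) (e₂ i) * e₄ i = 0 := h24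
  have h31 : ∑ i, (starRingEnd ℂ) (e₃ i) * e₁ i = 0 := by
    have := congrArg (starRingEnd ℂ) h13'
    rw [map_sum, map_zero] at this
    rw [← this]
    apply Finset.sum_congr rfl
    intro i _
    simp [_root_.map_mul, Complex.conj_conj, mul_comm]
  have h42 : ∑ i, (starRingEnd ℂ) (e₄ i) * e₂ i = 0 := by
    have := congrArg (starRingEnd ℂ) h24'
    rw [map_sum, map_zero] at this
    rw [← this]
    apply Finset.sum_congr rfl
    intro i _
    simp [_root_.map_mul, Complex.conj_conj, mul_comm]
  -- norm of v
  have hsq1 : ((Real.sqrt μ₁ : ℂ)) * ((Real.sqrt μ₁ : ℂ)) = (μ₁ : ℂ) := by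
    rw [← Complex.ofReal_mul, Real.mul_self_sqrt hμ₁]
  have hsq2 : ((Real.sqrt μ₂ : ℂ)) * ((Real.sqrt μ₂ : ℂ)) = (μ₂ : ℂ) := by
    rw [← Complex.ofReal_mul, Real.mul_self_sqrt hμ₂]
  have hNc : (∑ x, (starRingEnd ℂ) (v x) * v x) = 1 := by
    rw [Fintype.sum_prod_type]
    have expand : ∀ i j, (starRingEnd ℂ) (v (i, j)) * v (i, j)
        = (μ₁:ℂ) * (((starRingEnd ℂ) (e₁ i) * e₁ i) * ((starRingEnd ℂ) (e₂ j) * e₂ j))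
          + (μ₂:ℂ) * (((starRingEnd ℂ) (e₃ i) * e₃ i) * ((starRingEnd ℂ) (e₄ j) * e₄ j))
          + ((Real.sqrt μ₁:ℂ)*(Real.sqrt μ₂:ℂ)) * (((starRingEnd ℂ) (e₁ i) * e₃ i) * ((starRingEnd ℂ) (e₂ j) * e₄ j))
          + ((Real.sqrt μ₁:ℂ)*(Real.sqrt μ₂:ℂ)) * (((starRingEnd ℂ) (e₃ i) * e₁ i) * ((starRingEnd ℂ) (e₄ j) * e₂ j)) := by
      intro i j
      rw [hv]
      simp only [map_add, _root_.map_mul, Complex.conj_ofReal]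
      rw [← hsq1, ← hsq2]
      ring
    calc ∑ i, ∑ j, (starRingEnd ℂ) (v (i, j)) * v (i, j)
        = ∑ i, ∑ j,
          ((μ₁:ℂ) * (((starRingEnd ℂ) (e₁ i) * e₁ i) * ((starRingEnd ℂ) (e₂ j) * e₂ j))
          + (μ₂:ℂ) * (((starRingEnd ℂ) (e₃ i) * e₃ i) * ((starRingEnd ℂ) (e₄ j) * e₄ j))
          + ((Real.sqrt μ₁:ℂ)*(Real.sqrt μ₂:ℂ)) * (((starRingEnd ℂ) (e₁ i) * e₃ i) * ((starRingEnd ℂ) (e₂ j) * e₄ j))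
          + ((Real.sqrt μ₁:ℂ)*(Real.sqrt μ₂:ℂ)) * (((starRingEnd ℂ) (e₃ i) * e₁ i) * ((starRingEnd ℂ) (e₄ j) * e₂ j))) := by
          exact Finset.sum_congr rfl fun i _ => Finset.sum_congr rfl fun j _ => expand i j
      _ = (μ₁:ℂ) * ((∑ i, (starRingEnd ℂ) (e₁ i) * e₁ i) * (∑ j, (starRingEnd ℂ) (e₂ j) * e₂ j))
          + (μ₂:ℂ) * ((∑ i, (starRingEnd ℂ) (e₃ i) * e₃ i) * (∑ j, (starRingEnd ℂ) (e₄ j) * e₄ j))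
          + ((Real.sqrt μ₁:ℂ)*(Real.sqrt μ₂:ℂ)) * ((∑ i, (starRingEnd ℂ) (e₁ i) * e₃ i) * (∑ j, (starRingEnd ℂ) (e₂ j) * e₄ j))
          + ((Real.sqrt μ₁:ℂ)*(Real.sqrt μ₂:ℂ)) * ((∑ i, (starRingEnd ℂ) (e₃ i) * e₁ i) * (∑ j, (starRingEnd ℂ) (e₄ j) * e₂ j)) := by
          have factor : ∀ (k : ℂ) (f g : Fin d → ℂ),
              (∑ i, ∑ j, k * (f i * g j)) = k * ((∑ i, f i) * (∑ j, g j)) := by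
            intro k f g
            rw [Finset.sum_mul_sum, Finset.mul_sum]
            exact Finset.sum_congr rfl fun i _ => by rw [Finset.mul_sum]
          simp only [Finset.sum_add_distrib]
          rw [factor, factor, factor, factor]
      _ = 1 := by
          rw [hS1, hS2, hS3, hS4, h13', h31]
          norm_num
          exact_mod_cast hμ
  -- value of c
  have hcval : c = (1/(Real.sqrt d:ℂ)) * ((Real.sqrt μ₁:ℂ) * a + (Real.sqrt μ₂:ℂ) * b) := by
    rw [hc, Fintype.sum_prod_type]
    have inner : ∀ i, ∑ j, (starRingEnd ℂ) (Phi0 d (i, j)) * v (i, j)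
        = (1/(Real.sqrt d:ℂ)) * v (i, i) := by
      intro i
      have step : ∀ j, (starRingEnd ℂ) (Phi0 d (i, j)) * v (i, j)
          = if i = j then (1/(Real.sqrt d:ℂ)) * v (i, j) else 0 := by
        intro j
        rw [hPhiReal]
        by_cases h : i = j <;> simp [Phi0, h]
      rw [Finset.sum_congr rfl fun j _ => step j, Finset.sum_ite_eq]
      simp
    rw [Finset.sum_congr rfl (fun i _ => inner i), ← Finset.mul_sum]
    congr 1
    rw [hv]
    simp only [ha, hb, Finset.mul_sum, Finset.sum_add_distrib]
  clear_value a b c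
  -- bound on |a|, |b|
  have habs : ∀ (f g : Fin d → ℂ), (∑ i, ‖f i‖ ^ 2 = 1) →
      (∑ i, ‖g i‖ ^ 2 = 1) → ‖∑ i, f i * g i‖ ≤ 1 := by
    intro f g hf hg
    have h1 : ‖∑ i, f i * g i‖ ≤ ∑ i, ‖f i‖ * ‖g i‖ := by
      refine (norm_sum_le _ _).trans_eq ?_
      exact Finset.sum_congr rfl fun i _ => norm_mul _ _
    have h2 : (∑ i, ‖f i‖ * ‖g i‖) ^ 2 ≤ 1 := by
      calc (∑ i, ‖f i‖ * ‖g i‖) ^ 2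
          ≤ (∑ i, ‖f i‖ ^ 2) * (∑ i, ‖g i‖ ^ 2) :=
            Finset.sum_mul_sq_le_sq_mul_sq _ _ _
        _ = 1 := by rw [hf, hg]; ring
    have h3 : (0:ℝ) ≤ ∑ i, ‖f i‖ * ‖g i‖ :=
      Finset.sum_nonneg fun i _ => mul_nonneg (norm_nonneg _) (norm_nonneg _)
    nlinarith
  have hab : ‖a‖ ≤ 1 := by rw [ha]; exact habs e₁ e₂ he₁ he₂
  have hbb : ‖b‖ ≤ 1 := by rw [hb]; exact habs e₃ e₄ he₃ he₄
  -- bound on normSq c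
  have hsqrtd : ‖(1/(Real.sqrt d:ℂ))‖ = 1 / Real.sqrt d := by
    rw [norm_div, norm_one, Complex.norm_real, Real.norm_eq_abs,
      abs_of_nonneg (Real.sqrt_nonneg _)]
  have hcabs : ‖c‖ ≤ (1 / Real.sqrt d) * (Real.sqrt μ₁ + Real.sqrt μ₂) := by
    rw [hcval, norm_mul, hsqrtd]
    apply mul_le_mul_of_nonneg_left _ (by positivity)
    calc ‖(Real.sqrt μ₁:ℂ) * a + (Real.sqrt μ₂:ℂ) * b‖
        ≤ ‖(Real.sqrt μ₁:ℂ) * a‖ + ‖(Real.sqrt μ₂:ℂ) * b‖ :=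
          norm_add_le _ _
      _ ≤ Real.sqrt μ₁ + Real.sqrt μ₂ := by
          rw [norm_mul, norm_mul, Complex.norm_real, Complex.norm_real, Real.norm_eq_abs, Real.norm_eq_abs,
            abs_of_nonneg (Real.sqrt_nonneg _), abs_of_nonneg (Real.sqrt_nonneg _)]
          exact add_le_add (mul_le_of_le_one_right (Real.sqrt_nonneg μ₁) hab)
            (mul_le_of_le_one_right (Real.sqrt_nonneg μ₂) hbb)
  have hnormsq : Complex.normSq c ≤ 2 / (d:ℝ) := by
    have h1 : Complex.normSq c = ‖c‖ ^ 2 := (Complex.sq_norm c).symm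
    have h2 : ‖c‖ ^ 2 ≤ ((1 / Real.sqrt d) * (Real.sqrt μ₁ + Real.sqrt μ₂)) ^ 2 :=
      pow_le_pow_left₀ (norm_nonneg c) hcabs 2
    have h3 : ((1 / Real.sqrt d) * (Real.sqrt μ₁ + Real.sqrt μ₂)) ^ 2
        = (1 / (d:ℝ)) * (Real.sqrt μ₁ + Real.sqrt μ₂) ^ 2 := by
      rw [mul_pow, div_pow, one_pow, Real.sq_sqrt hdpos.le]
    have h4 : (Real.sqrt μ₁ + Real.sqrt μ₂) ^ 2 ≤ 2 := by
      have s1 : Real.sqrt μ₁ ^ 2 = μ₁ := Real.sq_sqrt hμ₁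
      have s2 : Real.sqrt μ₂ ^ 2 = μ₂ := Real.sq_sqrt hμ₂
      nlinarith [sq_nonneg (Real.sqrt μ₁ - Real.sqrt μ₂)]
    calc Complex.normSq c = ‖c‖ ^ 2 := h1
      _ ≤ (1 / (d:ℝ)) * (Real.sqrt μ₁ + Real.sqrt μ₂) ^ 2 := by rw [← h3]; exact h2
      _ ≤ (1 / (d:ℝ)) * 2 := by
          have h0 : (0:ℝ) ≤ 1 / (d:ℝ) := by positivity
          nlinarith
      _ = 2 / (d:ℝ) := by ring
  -- put it together
  have hre : (star v ⬝ᵥ (sigmaPT d lam) *ᵥ v).re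
      = lam - (lam + 1) * Complex.normSq c := by
    rw [hdot, hNc]
    have h2 : (starRingEnd ℂ) c * c = ((Complex.normSq c : ℝ) : ℂ) := by
      rw [mul_comm, Complex.mul_conj]
    rw [h2]
    have : (lam:ℂ) * 1 - ((lam:ℂ)+1) * ((Complex.normSq c : ℝ) : ℂ)
        = ((lam - (lam + 1) * Complex.normSq c : ℝ) : ℂ) := by push_cast; ring
    rw [this, Complex.ofReal_re]
  rw [hre]
  have hl2 : 2 ≤ lam * ((d:ℝ) - 2) := by
    rw [div_le_iff₀ hd2] at hlam; linarith
  have hsd : Complex.normSq c * (d:ℝ) ≤ 2 := by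
    have := mul_le_mul_of_nonneg_right hnormsq hdpos.le
    rwa [div_mul_cancel₀] at this
    exact hdpos.ne'
  have hs0 : 0 ≤ Complex.normSq c := Complex.normSq_nonneg c
  nlinarith [mul_le_mul_of_nonneg_left hsd (by linarith : (0:ℝ) ≤ lam + 1)]
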